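/- Let F be a field, d, k ∈ ℕ, and suppose rank : Pol_{≤d}(F^∞, F^k) → ℝ₊ satisfies the linear core property (with some constants L, β > 0 and rank threshold r₀), monotonicity under restrictions, and the restriction Lipschitz property. Then for every σ ∈ (0,1] there exist constants C, κ > 0 such that for every n ∈ ℕ and every polynomial map φ ∈ Pol_{≤d}(F^n, F^k): if I ~ [n]_σ is a random subset, then Pr[rank(φ_{|I}) ≥ κ·rank(φ)] ≥ 1 − C·e^{−κ·rank(φ)}. -/

import Mathlib

/-- An element of `Pol(F^∞, F^k)`: a `k`-tuple of polynomials in variables indexed by `ℕ`. -/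
abbrev PolyMap (F : Type*) [CommSemiring F] (k : ℕ) := Fin k → MvPolynomial ℕ F

/-- `φ` has degree at most `d`, i.e. `φ ∈ Pol_{≤d}(F^∞, F^k)`. -/
def DegLE {F : Type*} [CommSemiring F] {k : ℕ} (d : ℕ) (φ : PolyMap F k) : Prop :=
  ∀ j, (φ j).totalDegree ≤ d

open Classical in
/-- The restriction `φ_{|I}`: substitute `0` for every variable `x_i` with `i ∉ I`. -/
noncomputable def prestrict {F : Type*} [CommSemiring F] {k : ℕ} (I : Set ℕ)
    (φ : PolyMap F k) : PolyMap F k :=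
  fun j => MvPolynomial.aeval (fun i => if i ∈ I then MvPolynomial.X i else 0) (φ j)

open Classical in
/-- The probability, under the distribution on subsets of `Fin n` where each element is
included independently with probability `σ`, of the event `E`. -/
noncomputable def subsetPr (n : ℕ) (σ : ℝ) (E : Finset (Fin n) → Prop) : ℝ :=
  ∑ I : Finset (Fin n), if E I then σ ^ I.card * (1 - σ) ^ (n - I.card) else 0

namespace RRaux


open MvPolynomial Finset

variable {F : Type} [Field F] {k : ℕ}

lemma prestrict_prestrict (I J : Set ℕ) (φ : PolyMap F k) :
    prestrict I (prestrict J φ) = prestrict (I ∩ J) φ := by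
  classical
  funext j
  simp only [prestrict]
  rw [comp_aeval_apply]
  have hfun : (fun i => (MvPolynomial.aeval (R := F) fun i' => if i' ∈ I then (X i' : MvPolynomial ℕ F) else 0) (if i ∈ J then (X i : MvPolynomial ℕ F) else 0)) = fun i => @ite (MvPolynomial ℕ F) (i ∈ I ∩ J) (Classical.propDecidable _) (X i) 0 := by
    funext i
    by_cases hJ : i ∈ J <;> by_cases hI : i ∈ I <;>
      simp [hI, hJ, Set.mem_inter_iff]
  rw [hfun]

lemma prestrict_self {s : Set ℕ} (φ : PolyMap F k) (h : ∀ j, ↑(φ j).vars ⊆ s) :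
    prestrict s φ = φ := by
  classical
  funext j
  exact MvPolynomial.aeval_ite_mem_eq_self (φ j) (h j)

lemma prestrict_vars (I : Set ℕ) (φ : PolyMap F k) (j : Fin k) :
    (prestrict I φ j).vars ⊆ (φ j).vars := by
  classical
  simp only [prestrict, aeval_eq_bind₁]
  refine (vars_bind₁ _ _).trans ?_
  intro x hx
  simp only [Finset.mem_biUnion] at hx
  obtain ⟨i, hi, hx⟩ := hx
  by_cases h : i ∈ I
  · simp only [h, if_true, vars_X] at hx
    simpa using (Finset.mem_singleton.1 hx) ▸ hi
  · simp [h, vars_0] at hx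

lemma prestrict_degLE {d : ℕ} (I : Set ℕ) {φ : PolyMap F k} (h : DegLE d φ) :
    DegLE d (prestrict I φ) := by
  classical
  intro j
  refine le_trans ?_ (h j)
  simp only [prestrict]
  conv_lhs => rw [(φ j).as_sum]
  rw [map_sum]
  refine (MvPolynomial.totalDegree_finset_sum _ _).trans ?_
  refine Finset.sup_le fun u hu => ?_
  rw [MvPolynomial.aeval_monomial]
  refine (MvPolynomial.totalDegree_mul _ _).trans ?_
  have h1 : (algebraMap F (MvPolynomial ℕ F) ((φ j).coeff u)).totalDegree = 0 := by
    rw [MvPolynomial.algebraMap_eq]; exact totalDegree_C _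
  rw [h1, zero_add]
  refine le_trans (MvPolynomial.totalDegree_finset_prod _ _) ?_
  refine le_trans ?_ (MvPolynomial.le_totalDegree hu)
  rw [Finsupp.sum]
  refine Finset.sum_le_sum fun i hi => ?_
  refine (MvPolynomial.totalDegree_pow _ _).trans ?_
  by_cases hI : i ∈ I
  · simp [hI, MvPolynomial.totalDegree_X]
  · simp [hI]



open Finset

open Classical in
noncomputable def rrP (J : Finset ℕ) (τ : ℝ) (E : Finset ℕ → Prop) : ℝ :=
  ∑ A ∈ J.powerset, if E A then τ ^ A.card * (1 - τ) ^ (J.card - A.card) else 0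

lemma rrP_weight_sum (J : Finset ℕ) (τ : ℝ) :
    ∑ A ∈ J.powerset, τ ^ A.card * (1 - τ) ^ (J.card - A.card) = 1 := by
  classical
  have h := Finset.prod_add (fun _ : ℕ => τ) (fun _ : ℕ => (1 - τ)) J
  simp only [Finset.prod_const] at h
  have h2 : ∀ A ∈ J.powerset, τ ^ A.card * (1 - τ) ^ (J \ A).card
      = τ ^ A.card * (1 - τ) ^ (J.card - A.card) := by
    intro A hA
    rw [Finset.card_sdiff_of_subset (Finset.mem_powerset.1 hA)]
  rw [Finset.sum_congr rfl h2] at h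
  rw [← h]
  norm_num

lemma rrP_nonneg {τ : ℝ} (h0 : 0 ≤ τ) (h1 : τ ≤ 1) (J : Finset ℕ) (E : Finset ℕ → Prop) :
    0 ≤ rrP J τ E := by
  classical
  refine Finset.sum_nonneg fun A _ => ?_
  split
  · exact mul_nonneg (pow_nonneg h0 _) (pow_nonneg (by linarith) _)
  · exact le_refl 0

lemma rrP_le_one {τ : ℝ} (h0 : 0 ≤ τ) (h1 : τ ≤ 1) (J : Finset ℕ) (E : Finset ℕ → Prop) :
    rrP J τ E ≤ 1 := by
  classical
  rw [← rrP_weight_sum J τ]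
  refine Finset.sum_le_sum fun A _ => ?_
  split
  · exact le_refl _
  · exact mul_nonneg (pow_nonneg h0 _) (pow_nonneg (by linarith) _)

lemma rrP_congr {τ : ℝ} {J : Finset ℕ} {E E' : Finset ℕ → Prop}
    (h : ∀ A, E A ↔ E' A) : rrP J τ E = rrP J τ E' := by
  classical
  refine Finset.sum_congr rfl fun A _ => ?_
  by_cases hE : E A
  · rw [if_pos hE, if_pos ((h A).1 hE)]
  · rw [if_neg hE, if_neg (fun h' => hE ((h A).2 h'))]

lemma rrP_mono {τ : ℝ} (h0 : 0 ≤ τ) (h1 : τ ≤ 1) {J : Finset ℕ} {E E' : Finset ℕ → Prop}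
    (h : ∀ A, A ∈ J.powerset → E A → E' A) : rrP J τ E ≤ rrP J τ E' := by
  classical
  refine Finset.sum_le_sum fun A hA => ?_
  by_cases hE : E A
  · rw [if_pos hE, if_pos (h A hA hE)]
  · rw [if_neg hE]
    split
    · exact mul_nonneg (pow_nonneg h0 _) (pow_nonneg (by linarith) _)
    · exact le_refl _

lemma rrP_add_compl (J : Finset ℕ) (τ : ℝ) (E : Finset ℕ → Prop) :
    rrP J τ E + rrP J τ (fun A => ¬ E A) = 1 := by
  classical
  unfold rrP
  rw [← Finset.sum_add_distrib]
  conv_rhs => rw [← rrP_weight_sum J τ]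
  refine Finset.sum_congr rfl fun A _ => ?_
  by_cases hE : E A
  · rw [if_pos hE, if_neg (not_not_intro hE), add_zero]
  · rw [if_neg hE, if_pos hE, zero_add]

lemma rrP_insert {a : ℕ} {J : Finset ℕ} (ha : a ∉ J) (τ : ℝ) (E : Finset ℕ → Prop) :
    rrP (insert a J) τ E
      = (1 - τ) * rrP J τ E + τ * rrP J τ (fun A => E (insert a A)) := by
  classical
  unfold rrP
  rw [Finset.sum_powerset_insert ha, Finset.mul_sum, Finset.mul_sum]
  congr 1
  · refine Finset.sum_congr rfl fun t ht => ?_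
    have htc : t.card ≤ J.card := Finset.card_le_card (Finset.mem_powerset.1 ht)
    have hc : (insert a J).card - t.card = (J.card - t.card) + 1 := by
      rw [Finset.card_insert_of_notMem ha]; omega
    by_cases hEt : E t <;> simp [hEt, hc] <;> ring
  · refine Finset.sum_congr rfl fun t ht => ?_
    have hat : a ∉ t := fun h => ha (Finset.mem_powerset.1 ht h)
    have h1 : (insert a t).card = t.card + 1 := Finset.card_insert_of_notMem hat
    have htc : t.card ≤ J.card := Finset.card_le_card (Finset.mem_powerset.1 ht)
    have h2 : (insert a J).card - (t.card + 1) = J.card - t.card := by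
      rw [Finset.card_insert_of_notMem ha]; omega
    by_cases hEt : E (insert a t) <;> simp [hEt, h1, h2] <;> ring

open Classical in
lemma rrP_one (J : Finset ℕ) (E : Finset ℕ → Prop) :
    rrP J 1 E = if E J then 1 else 0 := by
  classical
  unfold rrP
  rw [Finset.sum_eq_single J]
  · simp
  · intro A hA hne
    have hlt : A.card < J.card :=
      Finset.card_lt_card (lt_of_le_of_ne (Finset.mem_powerset.1 hA)
        (fun h => hne (h ▸ rfl)))
    have : J.card - A.card ≠ 0 := by omega
    simp [sub_self, zero_pow this]
  · intro h
    exact absurd (Finset.mem_powerset.2 Finset.Subset.rfl) h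

lemma rrP_marginal {I J : Finset ℕ} (τ : ℝ) (E : Finset ℕ → Prop) (hIJ : I ⊆ J)
    (hE : ∀ A, E A ↔ E (A ∩ I)) : rrP J τ E = rrP I τ E := by
  classical
  have key : ∀ s : Finset ℕ, Disjoint I s → rrP (I ∪ s) τ E = rrP I τ E := by
    intro s
    induction s using Finset.induction_on with
    | empty => intro _; rw [Finset.union_empty]
    | @insert a s has ih =>
      intro hdisj
      have haI : a ∉ I := fun h => (Finset.disjoint_left.1 hdisj h) (Finset.mem_insert_self a s)
      have hdisj' : Disjoint I s := hdisj.mono_right (Finset.subset_insert a s)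
      have haIs : a ∉ I ∪ s := by
        simp only [Finset.mem_union, not_or]
        exact ⟨haI, has⟩
      have hins : I ∪ insert a s = insert a (I ∪ s) := Finset.union_insert a I s
      have hcg : rrP (I ∪ s) τ (fun A => E (insert a A)) = rrP (I ∪ s) τ E := by
        refine rrP_congr fun A => ?_
        show E (insert a A) ↔ E A
        have h1 : insert a A ∩ I = A ∩ I := by
          ext x
          simp only [Finset.mem_inter, Finset.mem_insert]
          constructor
          · rintro ⟨rfl | h, hx⟩
            · exact absurd hx haI
            · exact ⟨h, hx⟩
          · tauto
        rw [hE (insert a A), h1]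
        exact (hE A).symm
      rw [hins, rrP_insert haIs, hcg, ih hdisj']
      ring
  have := key (J \ I) (Finset.disjoint_sdiff)
  rwa [Finset.union_sdiff_of_subset hIJ] at this

lemma rrP_mul (J : Finset ℕ) (σ τ : ℝ) (E : Finset ℕ → Prop) :
    rrP J (σ * τ) E
      = ∑ A ∈ J.powerset, (σ ^ A.card * (1 - σ) ^ (J.card - A.card)) * rrP A τ E := by
  classical
  induction J using Finset.induction_on generalizing E with
  | empty => simp [rrP]
  | @insert a s ha ih =>
    rw [rrP_insert ha, ih, ih, Finset.sum_powerset_insert ha, Finset.mul_sum, Finset.mul_sum,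
      ← Finset.sum_add_distrib, ← Finset.sum_add_distrib]
    refine Finset.sum_congr rfl fun t ht => ?_
    have hat : a ∉ t := fun h => ha (Finset.mem_powerset.1 ht h)
    have htc : t.card ≤ s.card := Finset.card_le_card (Finset.mem_powerset.1 ht)
    have h1 : (insert a t).card = t.card + 1 := Finset.card_insert_of_notMem hat
    have h2 : (insert a s).card - t.card = (s.card - t.card) + 1 := by
      rw [Finset.card_insert_of_notMem ha]; omega
    have h3 : (insert a s).card - (t.card + 1) = s.card - t.card := by
      rw [Finset.card_insert_of_notMem ha]; omega
    rw [rrP_insert hat, h1, h2, h3]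
    ring



lemma subsetPr_eq_rrP (n : ℕ) (σ : ℝ) (E : Finset ℕ → Prop) :
    subsetPr n σ (fun I => E (I.image Fin.val)) = rrP (Finset.range n) σ E := by
  classical
  unfold subsetPr rrP
  refine Finset.sum_bij' (fun I _ => I.image Fin.val)
    (fun A hA => A.attachFin fun m hm => Finset.mem_range.1 ((Finset.mem_powerset.1 hA) hm))
    ?_ ?_ ?_ ?_ ?_
  · intro I _
    rw [Finset.mem_powerset]
    intro m hm
    obtain ⟨x, _, rfl⟩ := Finset.mem_image.1 hm
    exact Finset.mem_range.2 x.isLt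
  · intro A hA
    exact Finset.mem_univ _
  · intro I _
    ext x
    simp [Finset.mem_attachFin, Finset.mem_image, Fin.val_inj]
  · intro A hA
    ext m
    simp only [Finset.mem_image, Finset.mem_attachFin]
    constructor
    · rintro ⟨x, hx, rfl⟩; exact hx
    · intro hm
      exact ⟨⟨m, Finset.mem_range.1 ((Finset.mem_powerset.1 hA) hm)⟩, hm, rfl⟩
  · intro I _
    have hc : (I.image Fin.val).card = I.card :=
      Finset.card_image_of_injective I Fin.val_injective
    rw [hc, Finset.card_range]

lemma rrP_le_card_mul {τ c : ℝ} (h0 : 0 ≤ τ) (h1 : τ ≤ 1) (J : Finset ℕ)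
    (E : Finset ℕ → Prop) (hc : 0 ≤ c)
    (h : ∀ B ∈ J.powerset, E B → τ ^ B.card * (1 - τ) ^ (J.card - B.card) ≤ c) :
    rrP J τ E ≤ (J.powerset.card : ℝ) * c := by
  classical
  have hper : ∀ B ∈ J.powerset,
      (if E B then τ ^ B.card * (1 - τ) ^ (J.card - B.card) else 0) ≤ c := by
    intro B hB
    split
    case isTrue hE => exact h B hB hE
    case isFalse hE => exact hc
  have := Finset.sum_le_card_nsmul J.powerset _ c hper
  rwa [nsmul_eq_mul] at this

lemma rrP_mul_le_sum {τ c : ℝ} (h0 : 0 ≤ τ) (h1 : τ ≤ 1) (J : Finset ℕ)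
    (E : Finset ℕ → Prop) (f : Finset ℕ → ℝ)
    (hf0 : ∀ A ∈ J.powerset, 0 ≤ f A)
    (hc : ∀ A ∈ J.powerset, E A → c ≤ f A) :
    rrP J τ E * c ≤ ∑ A ∈ J.powerset, (τ ^ A.card * (1 - τ) ^ (J.card - A.card)) * f A := by
  classical
  unfold rrP
  rw [Finset.sum_mul]
  refine Finset.sum_le_sum fun A hA => ?_
  have hW0 : 0 ≤ τ ^ A.card * (1 - τ) ^ (J.card - A.card) :=
    mul_nonneg (pow_nonneg h0 _) (pow_nonneg (by linarith) _)
  split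
  case isTrue hE => exact mul_le_mul_of_nonneg_left (hc A hA hE) hW0
  case isFalse hE =>
    rw [zero_mul]
    exact mul_nonneg hW0 (hf0 A hA)

end RRaux

set_option maxHeartbeats 4000000 in
open RRaux in
/-- **Random restriction theorem for polynomial maps from the linear core property**: if a
rank function on `Pol_{≤d}(F^∞, F^k)` is nonnegative, satisfies the linear core property
(with constants `L, β > 0` and rank threshold `r₀`), monotonicity under restrictions and the
restriction Lipschitz property, then for every `σ ∈ (0,1]` there are `C, κ > 0` such that
for every `φ ∈ Pol_{≤d}(F^n, F^k)`, the restriction of `φ` to a `σ`-random subset `I ⊆ [n]`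
has rank at least `κ·rank φ` with probability at least `1 - C·e^{-κ·rank φ}`. -/
theorem random_restriction_polymap_from_linear_core
    (F : Type) [Field F] (d k : ℕ) (rank : PolyMap F k → ℝ)
    (L β r₀ : ℝ) (hL : 0 < L) (hβ : 0 < β)
    -- rank takes nonnegative values
    (hnn : ∀ φ, DegLE d φ → 0 ≤ rank φ)
    -- linear core property with constants L, β and threshold r₀:
    -- for every φ ∈ Pol_{≤d}(F^n, F^k) with rank φ ≥ r₀ there is a set I ⊆ [n] of size
    -- at most L·rank φ such that rank φ_{|I} ≥ β·rank φ
    (hcore : ∀ (n : ℕ) (φ : PolyMap F k), DegLE d φ →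
      (∀ j, (φ j).vars ⊆ Finset.range n) → r₀ ≤ rank φ →
      ∃ I : Finset ℕ, I ⊆ Finset.range n ∧ ((I.card : ℝ) ≤ L * rank φ) ∧
        β * rank φ ≤ rank (prestrict (↑I : Set ℕ) φ))
    -- monotonicity under restrictions
    (hmono : ∀ (φ : PolyMap F k) (I : Set ℕ), DegLE d φ →
      rank (prestrict I φ) ≤ rank φ)
    -- restriction Lipschitz property
    (hlip : ∀ (φ : PolyMap F k) (I J : Set ℕ), DegLE d φ → J.Finite →
      rank (prestrict (I ∪ J) φ) ≤ rank (prestrict I φ) + J.ncard)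
    (σ : ℝ) (hσ0 : 0 < σ) (hσ1 : σ ≤ 1) :
    ∃ C κ : ℝ, 0 < C ∧ 0 < κ ∧
      ∀ (n : ℕ) (φ : PolyMap F k), DegLE d φ →
        -- φ ∈ Pol_{≤d}(F^n, F^k): only the variables x₁,…,x_n occur in φ
        (∀ j, (φ j).vars ⊆ Finset.range n) →
        1 - C * Real.exp (-κ * rank φ) ≤
          subsetPr n σ (fun I =>
            κ * rank φ ≤ rank (prestrict (↑(I.image Fin.val) : Set ℕ) φ)) := by
  classical
  have hlog2 : 0 < Real.log 2 := Real.log_pos (by norm_num)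
  set a : ℝ := 2 * (1 + L * Real.log 2) / β with ha_def
  have ha : 0 < a := by
    apply div_pos
    · nlinarith
    · exact hβ
  set ε : ℝ := Real.exp (-a) with hεdef
  have hε0 : 0 < ε := Real.exp_pos _
  have hε1 : ε < 1 := Real.exp_lt_one_iff.2 (by linarith)
  set σ₀ : ℝ := 1 - ε with hσ₀def
  have hσ₀0 : 0 < σ₀ := by rw [hσ₀def]; linarith
  have hσ₀1 : σ₀ < 1 := by rw [hσ₀def]; linarith
  set γ : ℝ := min (β / 2) 1 with hγdef
  have hγ0 : 0 < γ := lt_min (by linarith) one_pos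
  have hγ1 : γ ≤ 1 := min_le_right _ _
  have hγβ : γ ≤ β / 2 := min_le_left _ _
  obtain ⟨m₀, hm₀⟩ := exists_pow_lt_of_lt_one hσ0 hσ₀1
  set m : ℕ := m₀ + 1 with hmdef
  have hσ₀m : σ₀ ^ m ≤ σ := by
    calc σ₀ ^ m ≤ σ₀ ^ m₀ := pow_le_pow_of_le_one hσ₀0.le hσ₀1.le (by omega)
    _ ≤ σ := hm₀.le
  set τ : ℝ := σ ^ ((m : ℝ)⁻¹) with hτdef
  have hmne : (m : ℝ) ≠ 0 := Nat.cast_ne_zero.2 (by omega)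
  have hτ1 : τ ≤ 1 := Real.rpow_le_one hσ0.le hσ1 (by positivity)
  have hτm : τ ^ m = σ := by
    rw [hτdef, ← Real.rpow_natCast (σ ^ ((m : ℝ)⁻¹)) m, ← Real.rpow_mul hσ0.le,
      inv_mul_cancel₀ hmne, Real.rpow_one]
  have hτσ₀ : σ₀ ≤ τ := by
    have h1 : σ₀ = (σ₀ ^ m) ^ ((m : ℝ)⁻¹) := by
      rw [← Real.rpow_natCast σ₀ m, ← Real.rpow_mul hσ₀0.le, mul_inv_cancel₀ hmne,
        Real.rpow_one]
    rw [h1, hτdef]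
    exact Real.rpow_le_rpow (by positivity) hσ₀m (by positivity)
  have hτ0 : 0 < τ := lt_of_lt_of_le hσ₀0 hτσ₀
  have h1τ : 0 ≤ 1 - τ := by linarith
  have h1τε : 1 - τ ≤ ε := by
    have : 1 - σ₀ = ε := by rw [hσ₀def]; ring
    linarith [hτσ₀]
  refine ⟨m + Real.exp r₀, γ ^ m, by positivity, pow_pos hγ0 m, ?_⟩
  intro n φ hdeg hvars
  -- STEP : one round of τ-random restriction
  have step : ∀ J : Finset ℕ, J ⊆ Finset.range n → r₀ ≤ rank (prestrict (↑J) φ) →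
      1 - Real.exp (-(rank (prestrict (↑J) φ))) ≤
        rrP J τ (fun A => γ * rank (prestrict (↑J) φ) ≤ rank (prestrict (↑A) φ)) := by
    intro J hJ hr₀'
    set ρ := rank (prestrict (↑J : Set ℕ) φ) with hρdef
    have hdegJ : DegLE d (prestrict (↑J : Set ℕ) φ) := prestrict_degLE _ hdeg
    have hρ0 : 0 ≤ ρ := hnn _ hdegJ
    obtain ⟨I, hIr, hIc, hIrk⟩ := hcore n (prestrict (↑J) φ) hdegJ
        (fun j => (prestrict_vars _ φ j).trans (hvars j)) hr₀'
    set I' : Finset ℕ := I ∩ J with hI'def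
    have hI'J : I' ⊆ J := Finset.inter_subset_right
    have hI'rk : β * ρ ≤ rank (prestrict (↑I') φ) := by
      rw [prestrict_prestrict] at hIrk
      have hco : ((↑I : Set ℕ) ∩ ↑J) = ↑I' := by rw [hI'def, Finset.coe_inter]
      rwa [hco] at hIrk
    have hI'c : (I'.card : ℝ) ≤ L * ρ :=
      le_trans (Nat.cast_le.2 (Finset.card_le_card Finset.inter_subset_left)) hIc
    have hkey : ∀ A ∈ J.powerset, ¬ (γ * ρ ≤ rank (prestrict (↑A) φ)) →
        β * ρ / 2 < ((I' \ A).card : ℝ) := by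
      intro A _ hbad
      by_contra hle
      push_neg at hle
      apply hbad
      have hun' : (A ∩ I') ∪ (I' \ A) = I' := by
        ext x
        simp only [Finset.mem_union, Finset.mem_inter, Finset.mem_sdiff]
        tauto
      have hun : ((↑(A ∩ I') : Set ℕ) ∪ ↑(I' \ A)) = (↑I' : Set ℕ) := by
        rw [← Finset.coe_union, hun']
      have h1 := hlip φ (↑(A ∩ I')) (↑(I' \ A)) hdeg (Finset.finite_toSet _)
      rw [hun, Set.ncard_coe_finset] at h1
      have h2 : rank (prestrict (↑(A ∩ I')) φ) ≤ rank (prestrict (↑A) φ) := by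
        have hset : ((↑I' : Set ℕ) ∩ ↑A) = (↑(A ∩ I') : Set ℕ) := by
          ext x
          simp only [Set.mem_inter_iff, Finset.mem_coe, Finset.mem_inter]
          tauto
        have hcomp : prestrict (↑I' : Set ℕ) (prestrict (↑A) φ) = prestrict (↑(A ∩ I')) φ := by
          rw [prestrict_prestrict, hset]
        rw [← hcomp]
        exact hmono _ _ (prestrict_degLE _ hdeg)
      calc γ * ρ ≤ (β / 2) * ρ := mul_le_mul_of_nonneg_right hγβ hρ0
      _ ≤ rank (prestrict (↑A) φ) := by linarith
    have hcompl := rrP_add_compl J τ (fun A => γ * ρ ≤ rank (prestrict (↑A) φ))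
    have hmono1 : rrP J τ (fun A => ¬ (γ * ρ ≤ rank (prestrict (↑A) φ)))
        ≤ rrP J τ (fun A => β * ρ / 2 < ((I' \ A).card : ℝ)) :=
      rrP_mono hτ0.le hτ1 hkey
    have hmarg : rrP J τ (fun A => β * ρ / 2 < ((I' \ A).card : ℝ))
        = rrP I' τ (fun A => β * ρ / 2 < ((I' \ A).card : ℝ)) := by
      refine rrP_marginal τ _ hI'J fun A => ?_
      have hss : I' \ (A ∩ I') = I' \ A := by
        ext x; simp only [Finset.mem_sdiff, Finset.mem_inter]; tauto
      rw [hss]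
    have hbound : rrP I' τ (fun A => β * ρ / 2 < ((I' \ A).card : ℝ)) ≤ Real.exp (-ρ) := by
      have per : ∀ B ∈ I'.powerset, β * ρ / 2 < ((I' \ B).card : ℝ) →
          τ ^ B.card * (1 - τ) ^ (I'.card - B.card) ≤ Real.exp (-(a * (β * ρ / 2))) := by
        intro B hB h
        have hBI : B ⊆ I' := Finset.mem_powerset.1 hB
        have hcard : (I' \ B).card = I'.card - B.card := Finset.card_sdiff_of_subset hBI
        have h1 : τ ^ B.card ≤ 1 := pow_le_one₀ hτ0.le hτ1
        have h2 : (1 - τ) ^ (I'.card - B.card) ≤ ε ^ (I'.card - B.card) :=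
          pow_le_pow_left₀ h1τ h1τε _
        have h3 : ε ^ (I'.card - B.card)
            = Real.exp (-(a * ((I'.card - B.card : ℕ) : ℝ))) := by
          rw [hεdef, ← Real.exp_nat_mul]
          congr 1
          ring
        have h4 : Real.exp (-(a * ((I'.card - B.card : ℕ) : ℝ)))
            ≤ Real.exp (-(a * (β * ρ / 2))) := by
          apply Real.exp_le_exp.2
          have hcc : β * ρ / 2 ≤ ((I'.card - B.card : ℕ) : ℝ) := by
            rw [← hcard]; exact h.le
          nlinarith
        calc τ ^ B.card * (1 - τ) ^ (I'.card - B.card)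
            ≤ 1 * (ε ^ (I'.card - B.card)) :=
              mul_le_mul h1 h2 (pow_nonneg h1τ _) one_pos.le
        _ = ε ^ (I'.card - B.card) := one_mul _
        _ ≤ Real.exp (-(a * (β * ρ / 2))) := by rw [h3]; exact h4
      have hsum := rrP_le_card_mul hτ0.le hτ1 I' _ (Real.exp_pos _).le per
      rw [Finset.card_powerset] at hsum
      have hchain : ((2 ^ I'.card : ℕ) : ℝ) * Real.exp (-(a * (β * ρ / 2)))
          ≤ Real.exp (-ρ) := by
        have h2c : ((2 ^ I'.card : ℕ) : ℝ) = (2 : ℝ) ^ I'.card := by push_cast; ring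
        have h5 : (2 : ℝ) ^ I'.card ≤ Real.exp (L * ρ * Real.log 2) := by
          have he : (2 : ℝ) ^ I'.card = Real.exp ((I'.card : ℝ) * Real.log 2) := by
            rw [Real.exp_nat_mul, Real.exp_log (by norm_num : (0:ℝ) < 2)]
          rw [he]
          apply Real.exp_le_exp.2
          nlinarith
        have hexp : Real.exp (L * ρ * Real.log 2) * Real.exp (-(a * (β * ρ / 2)))
            = Real.exp (-ρ) := by
          rw [← Real.exp_add]
          congr 1
          have hab : a * (β * ρ / 2) = (1 + L * Real.log 2) * ρ := by
            rw [ha_def]; field_simp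
          rw [hab]; ring
        calc ((2 ^ I'.card : ℕ) : ℝ) * Real.exp (-(a * (β * ρ / 2)))
            = (2 : ℝ) ^ I'.card * Real.exp (-(a * (β * ρ / 2))) := by rw [h2c]
        _ ≤ Real.exp (L * ρ * Real.log 2) * Real.exp (-(a * (β * ρ / 2))) := by
            exact mul_le_mul_of_nonneg_right h5 (Real.exp_pos _).le
        _ = Real.exp (-ρ) := hexp
      exact le_trans hsum hchain
    have hfinal : rrP J τ (fun A => ¬ (γ * ρ ≤ rank (prestrict (↑A) φ))) ≤ Real.exp (-ρ) := by
      calc rrP J τ (fun A => ¬ (γ * ρ ≤ rank (prestrict (↑A) φ)))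
          ≤ rrP J τ (fun A => β * ρ / 2 < ((I' \ A).card : ℝ)) := hmono1
      _ = rrP I' τ (fun A => β * ρ / 2 < ((I' \ A).card : ℝ)) := hmarg
      _ ≤ Real.exp (-ρ) := hbound
    linarith
  -- ITER : m rounds
  have iter : ∀ (M : ℕ), ∀ (J : Finset ℕ), J ⊆ Finset.range n →
      r₀ ≤ γ ^ M * rank (prestrict (↑J) φ) →
      1 - M * Real.exp (-(γ ^ M * rank (prestrict (↑J) φ))) ≤
        rrP J (τ ^ M) (fun A => γ ^ M * rank (prestrict (↑J) φ) ≤ rank (prestrict (↑A) φ)) := by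
    intro M
    induction M with
    | zero =>
      intro J _ _
      rw [pow_zero, pow_zero, rrP_one]
      split
      · push_cast; norm_num
      · rename_i hfalse
        exact absurd (le_of_eq (one_mul _)) hfalse
    | succ M ih =>
      intro J hJ hth
      set ρ := rank (prestrict (↑J : Set ℕ) φ) with hρdef
      have hρ0 : 0 ≤ ρ := hnn _ (prestrict_degLE _ hdeg)
      have hγM : (0:ℝ) < γ ^ (M + 1) := pow_pos hγ0 _
      have hγle : γ ^ (M + 1) ≤ 1 := pow_le_one₀ hγ0.le hγ1
      have hρr₀ : r₀ ≤ ρ := le_trans hth (by nlinarith)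
      have hstep := step J hJ hρr₀
      have hpow : τ ^ (M + 1) = τ * τ ^ M := by ring
      rw [hpow, rrP_mul]
      have hE₁0 : 0 < Real.exp (-(γ ^ (M + 1) * ρ)) := Real.exp_pos _
      have hEρ : Real.exp (-ρ) ≤ Real.exp (-(γ ^ (M + 1) * ρ)) :=
        Real.exp_le_exp.2 (by nlinarith)
      have hτM0 : (0:ℝ) ≤ τ ^ M := pow_nonneg hτ0.le M
      have hτM1 : τ ^ M ≤ 1 := pow_le_one₀ hτ0.le hτ1
      have hperA : ∀ A ∈ J.powerset, γ * ρ ≤ rank (prestrict (↑A) φ) →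
          1 - M * Real.exp (-(γ ^ (M + 1) * ρ)) ≤
            rrP A (τ ^ M) (fun B => γ ^ (M + 1) * ρ ≤ rank (prestrict (↑B) φ)) := by
        intro A hAJ hAg
        have h2 : γ ^ (M + 1) * ρ ≤ γ ^ M * rank (prestrict (↑A) φ) := by
          have hh := mul_le_mul_of_nonneg_left hAg (pow_nonneg hγ0.le M)
          calc γ ^ (M + 1) * ρ = γ ^ M * (γ * ρ) := by ring
          _ ≤ γ ^ M * rank (prestrict (↑A) φ) := hh
        have hih := ih A ((Finset.mem_powerset.1 hAJ).trans hJ) (le_trans hth h2)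
        have hm1 : rrP A (τ ^ M) (fun B => γ ^ M * rank (prestrict (↑A) φ)
              ≤ rank (prestrict (↑B) φ))
            ≤ rrP A (τ ^ M) (fun B => γ ^ (M + 1) * ρ ≤ rank (prestrict (↑B) φ)) :=
          rrP_mono hτM0 hτM1 fun B _ hB => le_trans h2 hB
        have hexps : Real.exp (-(γ ^ M * rank (prestrict (↑A) φ)))
            ≤ Real.exp (-(γ ^ (M + 1) * ρ)) := Real.exp_le_exp.2 (by linarith)
        have hM0 : (0:ℝ) ≤ M := Nat.cast_nonneg M
        nlinarith
      have hSle : rrP J τ (fun A => γ * ρ ≤ rank (prestrict (↑A) φ)) ≤ 1 :=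
        rrP_le_one hτ0.le hτ1 _ _
      have hmain := rrP_mul_le_sum (c := 1 - M * Real.exp (-(γ ^ (M + 1) * ρ)))
        hτ0.le hτ1 J (fun A => γ * ρ ≤ rank (prestrict (↑A) φ))
        (fun A => rrP A (τ ^ M) (fun B => γ ^ (M + 1) * ρ ≤ rank (prestrict (↑B) φ)))
        (fun A _ => rrP_nonneg hτM0 hτM1 _ _) hperA
      refine le_trans ?_ hmain
      push_cast
      nlinarith [hstep, hSle, hE₁0.le, hEρ,
        mul_nonneg (sub_nonneg.2 hSle) (mul_nonneg (Nat.cast_nonneg (α := ℝ) M) hE₁0.le)]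
  -- conclusion
  have hr : rank (prestrict (↑(Finset.range n) : Set ℕ) φ) = rank φ := by
    rw [prestrict_self φ (fun j => Finset.coe_subset.2 (hvars j))]
  have hbridge : subsetPr n σ (fun I =>
        γ ^ m * rank φ ≤ rank (prestrict (↑(I.image Fin.val) : Set ℕ) φ))
      = rrP (Finset.range n) σ (fun A => γ ^ m * rank φ ≤ rank (prestrict (↑A) φ)) :=
    subsetPr_eq_rrP n σ (fun A => γ ^ m * rank φ ≤ rank (prestrict (↑A : Set ℕ) φ))
  rw [hbridge]
  by_cases hcase : r₀ ≤ γ ^ m * rank φ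
  · have h := iter m (Finset.range n) (Finset.Subset.refl _) (by rw [hr]; exact hcase)
    rw [hr, hτm] at h
    refine le_trans ?_ h
    have hneg : -(γ ^ m) * rank φ = -(γ ^ m * rank φ) := by ring
    rw [hneg]
    nlinarith [Real.exp_pos r₀, (Real.exp_pos (-(γ ^ m * rank φ))).le]
  · push_neg at hcase
    have h1 : 0 ≤ rrP (Finset.range n) σ (fun A => γ ^ m * rank φ ≤ rank (prestrict (↑A) φ)) :=
      rrP_nonneg hσ0.le hσ1 _ _
    have h2 : (1:ℝ) ≤ Real.exp (r₀ - γ ^ m * rank φ) := Real.one_le_exp (by linarith)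
    have h3 : Real.exp r₀ * Real.exp (-(γ ^ m) * rank φ)
        = Real.exp (r₀ - γ ^ m * rank φ) := by
      rw [← Real.exp_add]; ring_nf
    nlinarith [Real.exp_pos (-(γ ^ m) * rank φ), Nat.cast_nonneg (α := ℝ) m,
      (Real.exp_pos r₀).le]
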